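/- For every p ∈ [0,1] and every positive integer λ, it holds that pλ/(1+pλ) ≤ 1 - (1-p)^λ ≤ 2pλ/(1+pλ). -/
import Mathlib


theorem stmt6 (p : ℝ) (hp : p ∈ Set.Icc (0 : ℝ) 1) (l : ℕ) (hl : 0 < l) :
    p * l / (1 + p * l) ≤ 1 - (1 - p) ^ l ∧
      1 - (1 - p) ^ l ≤ 2 * (p * l) / (1 + p * l) := by
  obtain ⟨hp0, hp1⟩ := hp
  have hpl : (0:ℝ) ≤ p * l := by positivity
  have hd : (0:ℝ) < 1 + p * l := by linarith
  have hpow0 : (0:ℝ) ≤ (1 - p) ^ l := pow_nonneg (by linarith) l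
  have hb1 : 1 + p * l ≤ (1 + p) ^ l := by
    have := one_add_mul_le_pow (by linarith : (-2:ℝ) ≤ p) l
    linarith [this, mul_comm (l:ℝ) p]
  have hb2 : 1 - p * l ≤ (1 - p) ^ l := by
    have := one_add_mul_le_pow (by linarith : (-2:ℝ) ≤ -p) l
    have h : (1 + -p) ^ l = (1 - p) ^ l := by ring_nf
    rw [h] at this
    linarith [mul_comm (l:ℝ) (-p), this]
  have hkey : (1 - p) ^ l * (1 + p * l) ≤ 1 := by
    calc (1 - p) ^ l * (1 + p * l) ≤ (1 - p) ^ l * (1 + p) ^ l :=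
          mul_le_mul_of_nonneg_left hb1 hpow0
      _ = ((1 - p) * (1 + p)) ^ l := (mul_pow _ _ _).symm
      _ = (1 - p ^ 2) ^ l := by ring_nf
      _ ≤ 1 := pow_le_one₀ (by nlinarith) (by nlinarith)
  constructor
  · rw [div_le_iff₀ hd]
    nlinarith [hkey]
  · rw [le_div_iff₀ hd]
    rcases le_or_gt (p * l) 1 with h | h
    · nlinarith [hb2]
    · nlinarith [hpow0]
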